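/- Fix n ∈ ℕ and equip 𝕊 := {(x, y) ∈ ℝ^{n+1} × ℝ^{n+1} : x·y = 1} with the subspace topology. Then the ℝ-action t · (x, y) := (e^t x, e^{−t} y) on 𝕊 is proper: the map ℝ × 𝕊 → 𝕊 × 𝕊 sending (t, p) to (t · p, p) is a proper map, i.e. the preimage of every compact set is compact. -/

import Mathlib

open Matrix

/-- The pseudosphere model `𝕊 = {(x, y) ∈ ℝ^{n+1} × ℝ^{n+1} : x·y = 1}`, with the
subspace topology. -/
def PSphere (n : ℕ) : Type :=
  { p : (Fin (n + 1) → ℝ) × (Fin (n + 1) → ℝ) // p.1 ⬝ᵥ p.2 = 1 }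

instance (n : ℕ) : TopologicalSpace (PSphere n) :=
  instTopologicalSpaceSubtype

/-- The `ℝ`-action `t · (x, y) = (e^t x, e^{−t} y)` on the pseudosphere. -/
noncomputable def pact (n : ℕ) (t : ℝ) (p : PSphere n) : PSphere n :=
  ⟨(Real.exp t • p.1.1, Real.exp (-t) • p.1.2), by
    have h := p.2
    rw [smul_dotProduct, dotProduct_smul, smul_eq_mul, smul_eq_mul,
      ← mul_assoc, ← Real.exp_add, add_neg_cancel, Real.exp_zero, one_mul, h]⟩

instance (n : ℕ) : T2Space (PSphere n) :=
  inferInstanceAs (T2Space { p : (Fin (n + 1) → ℝ) × (Fin (n + 1) → ℝ) // p.1 ⬝ᵥ p.2 = 1 })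

lemma psphere_fst_ne_zero {n : ℕ} (p : PSphere n) : p.1.1 ≠ 0 := by
  intro h
  have := p.2
  rw [h, zero_dotProduct] at this
  exact one_ne_zero this.symm

lemma psphere_snd_ne_zero {n : ℕ} (p : PSphere n) : p.1.2 ≠ 0 := by
  intro h
  have := p.2
  rw [h, dotProduct_zero] at this
  exact one_ne_zero this.symm

lemma pact_continuous (n : ℕ) :
    Continuous (fun tp : ℝ × PSphere n => pact n tp.1 tp.2) := by
  apply Continuous.subtype_mk
  apply Continuous.prodMk
  · exact (Real.continuous_exp.comp continuous_fst).smul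
      ((continuous_fst.comp (continuous_subtype_val.comp continuous_snd)))
  · exact (Real.continuous_exp.comp continuous_fst.neg).smul
      ((continuous_snd.comp (continuous_subtype_val.comp continuous_snd)))

/-- The `ℝ`-action on the pseudosphere is proper: the map
`(t, p) ↦ (t · p, p)` has compact preimages of compact sets. -/
theorem stmt_13 (n : ℕ) :
    ∀ K : Set (PSphere n × PSphere n), IsCompact K →
      IsCompact ((fun tp : ℝ × PSphere n => (pact n tp.1 tp.2, tp.2)) ⁻¹' K) := by
  intro K hK
  rcases K.eq_empty_or_nonempty with rfl | hne
  · simp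
  set f : ℝ × PSphere n → PSphere n × PSphere n :=
    fun tp => (pact n tp.1 tp.2, tp.2) with hf_def
  have hf : Continuous f := (pact_continuous n).prodMk continuous_snd
  have hclosed : IsClosed (f ⁻¹' K) := hK.isClosed.preimage hf
  -- continuous norm functions on K
  have hc1 : Continuous fun P : PSphere n × PSphere n => ‖P.1.1.1‖ := by fun_prop
  have hc2 : Continuous fun P : PSphere n × PSphere n => ‖P.2.1.1‖ := by fun_prop
  have hc3 : Continuous fun P : PSphere n × PSphere n => ‖P.1.1.2‖ := by fun_prop
  have hc4 : Continuous fun P : PSphere n × PSphere n => ‖P.2.1.2‖ := by fun_prop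
  obtain ⟨P1, hP1K, hM⟩ := hK.exists_isMaxOn hne hc1.continuousOn
  obtain ⟨P2, hP2K, hm⟩ := hK.exists_isMinOn hne hc2.continuousOn
  obtain ⟨P3, hP3K, hM'⟩ := hK.exists_isMaxOn hne hc3.continuousOn
  obtain ⟨P4, hP4K, hm'⟩ := hK.exists_isMinOn hne hc4.continuousOn
  set M : ℝ := ‖P1.1.1.1‖
  set m : ℝ := ‖P2.2.1.1‖
  set M' : ℝ := ‖P3.1.1.2‖
  set m' : ℝ := ‖P4.2.1.2‖
  have hmpos : 0 < m := norm_pos_iff.mpr (psphere_fst_ne_zero P2.2)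
  have hm'pos : 0 < m' := norm_pos_iff.mpr (psphere_snd_ne_zero P4.2)
  -- bound on t for elements of the preimage
  have key : ∀ tp : ℝ × PSphere n, tp ∈ f ⁻¹' K →
      tp.1 ∈ Set.Icc (-Real.log (M' / m')) (Real.log (M / m)) := by
    rintro ⟨t, p⟩ htp
    have hmem : f (t, p) ∈ K := htp
    have h1 : ‖(f (t, p)).1.1.1‖ ≤ M := hM hmem
    have h2 : m ≤ ‖(f (t, p)).2.1.1‖ := hm hmem
    have h3 : ‖(f (t, p)).1.1.2‖ ≤ M' := hM' hmem
    have h4 : m' ≤ ‖(f (t, p)).2.1.2‖ := hm' hmem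
    have e1 : ‖(f (t, p)).1.1.1‖ = Real.exp t * ‖p.1.1‖ := by
      simp [hf_def, pact, norm_smul, Real.abs_exp]
    have e3 : ‖(f (t, p)).1.1.2‖ = Real.exp (-t) * ‖p.1.2‖ := by
      simp [hf_def, pact, norm_smul, Real.abs_exp]
    have e2 : ‖(f (t, p)).2.1.1‖ = ‖p.1.1‖ := rfl
    have e4 : ‖(f (t, p)).2.1.2‖ = ‖p.1.2‖ := rfl
    rw [e1] at h1
    rw [e2] at h2
    rw [e3] at h3
    rw [e4] at h4
    have hexp1 : Real.exp t * m ≤ M :=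
      le_trans (by nlinarith [Real.exp_pos t]) h1
    have hexp2 : Real.exp (-t) * m' ≤ M' :=
      le_trans (by nlinarith [Real.exp_pos (-t)]) h3
    have hMm : Real.exp t ≤ M / m := (le_div_iff₀ hmpos).mpr hexp1
    have hM'm' : Real.exp (-t) ≤ M' / m' := (le_div_iff₀ hm'pos).mpr hexp2
    have hMmpos : 0 < M / m := lt_of_lt_of_le (Real.exp_pos t) hMm
    have hM'm'pos : 0 < M' / m' := lt_of_lt_of_le (Real.exp_pos (-t)) hM'm'
    constructor
    · have : -t ≤ Real.log (M' / m') := (Real.le_log_iff_exp_le hM'm'pos).mpr hM'm'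
      linarith
    · exact (Real.le_log_iff_exp_le hMmpos).mpr hMm
  have hsubset : f ⁻¹' K ⊆
      Set.Icc (-Real.log (M' / m')) (Real.log (M / m)) ×ˢ (Prod.snd '' K) := by
    rintro ⟨t, p⟩ htp
    exact ⟨key _ htp, ⟨f (t, p), htp, rfl⟩⟩
  exact (isCompact_Icc.prod (hK.image continuous_snd)).of_isClosed_subset hclosed hsubset
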